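/- Let J ∈ ℝ^{M×M} be symmetric positive semidefinite and U ∈ ℝ^{M×(M−K)} with UᵀU = I. Let υ be a random vector in ℝ^M with E[υ] = 0 and E[υυᵀ] = J. Define the estimator error e = U(UᵀJU)†Uᵀ υ. Then E[eᵀWe] = Tr((UᵀJU)†(UᵀWU)) for any symmetric positive semidefinite W ∈ ℝ^{M×M}. -/
import Mathlib


open Matrix MeasureTheory

/-- `B` satisfies the four Moore–Penrose conditions for `A`. -/
def IsMoorePenrose {m n : Type*} [Fintype m] [Fintype n]
    (A : Matrix m n ℝ) (B : Matrix n m ℝ) : Prop :=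
  A * B * A = A ∧ B * A * B = B ∧ (A * B)ᵀ = A * B ∧ (B * A)ᵀ = B * A

lemma mp_unique {n : Type*} [Fintype n] [DecidableEq n]
    (A B C : Matrix n n ℝ) (hB : IsMoorePenrose A B) (hC : IsMoorePenrose A C) :
    B = C := by
  obtain ⟨b1, b2, b3, b4⟩ := hB
  obtain ⟨c1, c2, c3, c4⟩ := hC
  have hAB : A * B = A * C := by
    calc A * B = (A * B)ᵀ := b3.symm
    _ = Bᵀ * (A * C * A)ᵀ := by rw [c1, transpose_mul]
    _ = (A*B)ᵀ * (A*C)ᵀ := by simp only [transpose_mul, transpose_transpose, mul_assoc]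
    _ = (A*B) * (A*C) := by rw [b3, c3]
    _ = (A*B*A) * C := by simp only [mul_assoc]
    _ = A * C := by rw [b1]
  have hBA : B * A = C * A := by
    calc B * A = (B * A)ᵀ := b4.symm
    _ = (A*C*A)ᵀ * Bᵀ := by rw [c1, transpose_mul]
    _ = (C*A)ᵀ * (B*A)ᵀ := by simp only [transpose_mul, transpose_transpose, mul_assoc]
    _ = (C*A) * (B*A) := by rw [b4, c4]
    _ = C * (A*B*A) := by simp only [mul_assoc]
    _ = C * A := by rw [b1]
  calc B = B * A * B := b2.symm
  _ = B * (A * C) := by rw [mul_assoc, hAB]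
  _ = (C * A) * C := by rw [← hBA]; simp only [mul_assoc]
  _ = C := c2

lemma mp_symm {n : Type*} [Fintype n] [DecidableEq n]
    (A B : Matrix n n ℝ) (hA : Aᵀ = A) (hB : IsMoorePenrose A B) :
    Bᵀ = B := by
  obtain ⟨b1, b2, b3, b4⟩ := hB
  have : IsMoorePenrose A Bᵀ := by
    refine ⟨?_, ?_, ?_, ?_⟩
    · calc A * Bᵀ * A = (Aᵀ * B * Aᵀ)ᵀ := by
            simp only [transpose_mul, transpose_transpose, mul_assoc]
      _ = A := by rw [hA, b1, hA]
    · calc Bᵀ * A * Bᵀ = (B * (Aᵀ * B))ᵀ := by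
            simp only [transpose_mul, transpose_transpose, mul_assoc]
      _ = (B * A * B)ᵀ := by rw [hA, mul_assoc]
      _ = Bᵀ := by rw [b2]
    · calc (A * Bᵀ)ᵀ = B * Aᵀ := by rw [transpose_mul, transpose_transpose]
      _ = B * A := by rw [hA]
      _ = (B * A)ᵀ := b4.symm
      _ = Aᵀ * Bᵀ := by rw [transpose_mul]
      _ = A * Bᵀ := by rw [hA]
    · calc (Bᵀ * A)ᵀ = Aᵀ * B := by rw [transpose_mul, transpose_transpose]
      _ = A * B := by rw [hA]
      _ = (A * B)ᵀ := b3.symm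
      _ = Bᵀ * Aᵀ := by rw [transpose_mul]
      _ = Bᵀ * A := by rw [hA]
  exact mp_unique A Bᵀ B this ⟨b1, b2, b3, b4⟩

/-- The WMSE of the error `e = U(UᵀJU)†Uᵀυ`, where `E[υ] = 0` and `E[υυᵀ] = J`,
equals `Tr((UᵀJU)†(UᵀWU))`. -/
theorem wmse_ccrb_efficient {Ω : Type*} [MeasurableSpace Ω]
    (μ : Measure Ω) [IsProbabilityMeasure μ]
    {M r : ℕ} (J W : Matrix (Fin M) (Fin M) ℝ) (U : Matrix (Fin M) (Fin r) ℝ)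
    (B : Matrix (Fin r) (Fin r) ℝ) (υ : Ω → Fin M → ℝ)
    (hJ : J.PosSemidef) (hW : W.PosSemidef) (hU : Uᵀ * U = 1)
    (hB : IsMoorePenrose (Uᵀ * J * U) B)
    (hint : ∀ i j, Integrable (fun ω => υ ω i * υ ω j) μ)
    (hmean : ∀ i, ∫ ω, υ ω i ∂μ = 0)
    (hcov : ∀ i j, ∫ ω, υ ω i * υ ω j ∂μ = J i j) :
    ∫ ω, ((U * B * Uᵀ) *ᵥ υ ω) ⬝ᵥ (W *ᵥ ((U * B * Uᵀ) *ᵥ υ ω)) ∂μ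
      = (B * (Uᵀ * W * U)).trace := by
  set A := U * B * Uᵀ with hA
  set N := Aᵀ * W * A with hN
  -- Pointwise rewrite of the integrand
  have hpt : ∀ ω, (A *ᵥ υ ω) ⬝ᵥ (W *ᵥ (A *ᵥ υ ω))
      = ∑ k, ∑ l, N k l * (υ ω k * υ ω l) := by
    intro ω
    have h1 : (A *ᵥ υ ω) ⬝ᵥ (W *ᵥ (A *ᵥ υ ω)) = υ ω ⬝ᵥ (N *ᵥ υ ω) := by
      rw [hN, mulVec_mulVec, dotProduct_mulVec, ← mulVec_transpose, mulVec_mulVec,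
        dotProduct_mulVec, ← mulVec_transpose]
      simp [Matrix.mul_assoc]
    rw [h1]
    simp only [dotProduct, mulVec, Finset.mul_sum]
    exact Finset.sum_congr rfl fun k _ => Finset.sum_congr rfl fun l _ => by ring
  -- Compute the integral
  have hint2 : ∀ (k l : Fin M), Integrable (fun ω => N k l * (υ ω k * υ ω l)) μ :=
    fun k l => (hint k l).const_mul _
  have hI : ∫ ω, (A *ᵥ υ ω) ⬝ᵥ (W *ᵥ (A *ᵥ υ ω)) ∂μ = ∑ k, ∑ l, N k l * J k l := by
    rw [integral_congr_ae (Filter.Eventually.of_forall hpt)]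
    rw [integral_finset_sum _ fun k _ => integrable_finset_sum _ fun l _ => hint2 k l]
    refine Finset.sum_congr rfl fun k _ => ?_
    rw [integral_finset_sum _ fun l _ => hint2 k l]
    refine Finset.sum_congr rfl fun l _ => ?_
    rw [integral_const_mul, hcov]
  rw [hI]
  -- Turn the sum into a trace
  have hJs : Jᵀ = J := hJ.1
  have hsum : ∑ k, ∑ l, N k l * J k l = (N * J).trace := by
    simp only [Matrix.trace, Matrix.diag, Matrix.mul_apply]
    refine Finset.sum_congr rfl fun k _ => Finset.sum_congr rfl fun l _ => ?_
    rw [show J l k = Jᵀ k l from rfl, hJs]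
  rw [hsum]
  -- Matrix algebra
  have hSs : (Uᵀ * J * U)ᵀ = Uᵀ * J * U := by
    simp only [transpose_mul, transpose_transpose, hJs, Matrix.mul_assoc]
  have hBs : Bᵀ = B := mp_symm _ _ hSs hB
  have hAs : Aᵀ = A := by
    rw [hA]; simp only [transpose_mul, transpose_transpose, hBs, Matrix.mul_assoc]
  obtain ⟨b1, b2, b3, b4⟩ := hB
  calc (N * J).trace = (A * W * A * J).trace := by rw [hN, hAs]
  _ = (U * (B * (Uᵀ * W * U) * B * (Uᵀ * J))).trace := by
      rw [hA]; simp only [Matrix.mul_assoc]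
  _ = ((B * (Uᵀ * W * U) * B * (Uᵀ * J)) * U).trace := trace_mul_comm _ _
  _ = ((B * (Uᵀ * W * U)) * (B * (Uᵀ * J * U))).trace := by
      simp only [Matrix.mul_assoc]
  _ = ((B * (Uᵀ * J * U)) * (B * (Uᵀ * W * U))).trace := trace_mul_comm _ _
  _ = ((B * (Uᵀ * J * U) * B) * (Uᵀ * W * U)).trace := by simp only [Matrix.mul_assoc]
  _ = (B * (Uᵀ * W * U)).trace := by rw [b2]
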